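/- Suppose m : ℕ × ℕ → ℕ is a map such that for all h, l, n ∈ ℕ, the interval [n, n + m(h,l)] contains a set S = ∪_{i=1}^{h} [x_i, x_i + 2l] (with x_1 < ... < x_h positive integers) satisfying gcd(a, b) ∈ T(l) for all distinct a, b ∈ S; define Λ(h, l) := m(h, l) + 2·C(l). Let k, l, h ∈ ℕ, let A be a (2l+1)-syndetic set, let H_0 be an infinite pairwise prime subset of ℕ, and let F ⊆ T(l)\{1}. If (F, Λ(D(l)·h, l), l) is an A-Triveni triplet and there do NOT exist x, r ∈ ℕ and n ∈ H_0 with r ≡ 1 (mod n), x ∈ A and x·n^k·r ∈ A, then there exist w ∈ T(l) \ Mul(F) and a pairwise prime set C_w with |C_w| = h and wC_w ⊆ A. -/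

import Mathlib

/-- `A` is `l`-syndetic: it meets every block of `l` consecutive positive integers. -/
def SyndeticWith (A : Set ℕ) (l : ℕ) : Prop :=
  ∀ n : ℕ, 0 < n → ∃ m ∈ A, n ≤ m ∧ m < n + l

/-- `A` is syndetic if it is `l`-syndetic for some positive integer `l`. -/
def Syndetic (A : Set ℕ) : Prop :=
  ∃ l : ℕ, 0 < l ∧ SyndeticWith A l

/-- A pairwise prime subset of the positive integers. -/
def PairwisePrimeSet (B : Set ℕ) : Prop :=
  (∀ x ∈ B, 0 < x) ∧ ∀ a ∈ B, ∀ b ∈ B, a ≠ b → Nat.Coprime a b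

/-- `r(p,l)`: the largest `t` with `p ^ t ≤ 2 * l + 1`. -/
def rpl (p l : ℕ) : ℕ := Nat.findGreatest (fun t => p ^ t ≤ 2 * l + 1) (2 * l + 1)

/-- `T(l)`: products `∏_{p prime, p ≤ 2l+1} p ^ (r_p)` with `0 ≤ r_p ≤ r(p,l)`. -/
def Tset (l : ℕ) : Set ℕ :=
  {m | ∃ r : ℕ → ℕ, (∀ p, r p ≤ rpl p l) ∧
    m = ∏ p ∈ (Finset.range (2 * l + 2)).filter Nat.Prime, p ^ r p}

/-- `(F, h, l)` is a Triveni triplet with respect to `A`. -/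
def TriveniTriplet (A F : Set ℕ) (h l : ℕ) : Prop :=
  F ⊆ Tset l \ {1} ∧
  ∃ B : ℕ → Set ℕ,
    (∀ u ∈ F, PairwisePrimeSet (B u) ∧ (B u).ncard = h ∧ ∀ x ∈ B u, u * x ∈ A) ∧
    (∀ u ∈ F, ∀ v ∈ F, u ≠ v → ∀ x ∈ B u, ∀ y ∈ B v, Nat.Coprime x y)

/-- `C(l) = (2l+1)^(2l+1)`. -/
def Cbound (l : ℕ) : ℕ := (2 * l + 1) ^ (2 * l + 1)

/-- `D(l) = |T(l)|`. -/
noncomputable def Dcard (l : ℕ) : ℕ := (Tset l).ncard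

/-- `Mul(F) = {v ∈ T(l) : ∃ u ∈ F, u ∣ v}`. -/
def MulSet (l : ℕ) (F : Set ℕ) : Set ℕ := {v ∈ Tset l | ∃ u ∈ F, u ∣ v}

private lemma tset_pos {l m : ℕ} (hm : m ∈ Tset l) : 0 < m := by
  obtain ⟨r, _, rfl⟩ := hm
  exact Finset.prod_pos fun p hp => pow_pos (Nat.Prime.pos (Finset.mem_filter.mp hp).2) _

private lemma mem_tset_of_le {l d : ℕ} (h1 : 0 < d) (h2 : d ≤ 2 * l + 1) : d ∈ Tset l := by
  classical
  refine ⟨fun p => if p ∈ (Finset.range (2 * l + 2)).filter Nat.Prime then d.factorization p else 0,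
    ?_, ?_⟩
  · intro p
    dsimp only
    split_ifs with hp
    · have hp' : p.Prime := (Finset.mem_filter.mp hp).2
      have hdvd : p ^ d.factorization p ∣ d := Nat.ordProj_dvd d p
      have hle : p ^ d.factorization p ≤ 2 * l + 1 := le_trans (Nat.le_of_dvd h1 hdvd) h2
      have h3 : d.factorization p ≤ 2 * l + 1 :=
        le_trans (le_of_lt (Nat.lt_pow_self (n := d.factorization p) hp'.one_lt)) hle
      exact Nat.le_findGreatest h3 hle
    · exact Nat.zero_le _
  · dsimp only
    rw [Finset.prod_congr rfl (fun p hp => by rw [if_pos hp])]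
    have hsub : d.primeFactors ⊆ (Finset.range (2 * l + 2)).filter Nat.Prime := by
      intro p hp
      obtain ⟨pp, pd, _⟩ := Nat.mem_primeFactors.mp hp
      exact Finset.mem_filter.mpr
        ⟨Finset.mem_range.mpr (by have := Nat.le_of_dvd h1 pd; omega), pp⟩
    have base := Nat.factorization_prod_pow_eq_self h1.ne'
    rw [Finsupp.prod, Nat.support_factorization] at base
    have ext : ∏ p ∈ d.primeFactors, p ^ d.factorization p
        = ∏ p ∈ (Finset.range (2 * l + 2)).filter Nat.Prime, p ^ d.factorization p := by
      refine Finset.prod_subset hsub (fun p _ hp => ?_)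
      rw [← Nat.support_factorization] at hp
      rw [Finsupp.notMem_support_iff.mp hp, pow_zero]
    rw [← ext]
    exact base.symm

private lemma tset_dvd_factorial {l u : ℕ} (hu : u ∈ Tset l) : u ∣ Nat.factorial (2 * l + 1) := by
  classical
  obtain ⟨r, hr, rfl⟩ := hu
  have key : ∀ s : Finset ℕ, (∀ p ∈ s, Nat.Prime p) →
      (∀ p ∈ s, p ^ r p ∣ Nat.factorial (2 * l + 1)) →
      (∏ p ∈ s, p ^ r p) ∣ Nat.factorial (2 * l + 1) := by
    intro s
    induction s using Finset.induction with
    | empty => intro _ _; simpa using one_dvd _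
    | @insert a s hnotmem ih =>
        intro hprime hdvd
        rw [Finset.prod_insert hnotmem]
        refine Nat.Coprime.mul_dvd_of_dvd_of_dvd ?_ (hdvd _ (Finset.mem_insert_self _ _))
          (ih (fun p hp => hprime p (Finset.mem_insert_of_mem hp))
              (fun p hp => hdvd p (Finset.mem_insert_of_mem hp)))
        refine Nat.Coprime.prod_right fun q hq => Nat.Coprime.pow _ _ ?_
        exact (Nat.coprime_primes (hprime _ (Finset.mem_insert_self _ _))
          (hprime q (Finset.mem_insert_of_mem hq))).mpr (by rintro rfl; exact hnotmem hq)
  refine key _ (fun p hp => (Finset.mem_filter.mp hp).2) (fun p hp => ?_)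
  have hp' := (Finset.mem_filter.mp hp).2
  have hPle : p ^ rpl p l ≤ 2 * l + 1 := by
    have h0 : (fun t => p ^ t ≤ 2 * l + 1) 0 := by
      show p ^ 0 ≤ 2 * l + 1
      simp
    exact Nat.findGreatest_spec (P := fun t => p ^ t ≤ 2 * l + 1) (Nat.zero_le (2 * l + 1)) h0
  have h1 : p ^ r p ≤ 2 * l + 1 :=
    le_trans (Nat.pow_le_pow_right hp'.pos (hr p)) hPle
  exact Nat.dvd_factorial (pow_pos hp'.pos _) h1

private lemma noncop_bound {B : Set ℕ} (hco : ∀ x ∈ B, ∀ y ∈ B, x ≠ y → Nat.Coprime x y)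
    {Y : ℕ} (hY : Y ≠ 0) :
    {x ∈ B | ¬ Nat.Coprime x Y}.Finite ∧ {x ∈ B | ¬ Nat.Coprime x Y}.ncard ≤ Y.primeFactors.card := by
  classical
  have hinj : Set.InjOn (fun n => (Nat.gcd n Y).minFac) {x ∈ B | ¬ Nat.Coprime x Y} := by
    intro x hx y hy hxy
    by_contra hne
    have hp : Nat.Prime (Nat.gcd x Y).minFac := Nat.minFac_prime hx.2
    have hdx : (Nat.gcd x Y).minFac ∣ x := (Nat.minFac_dvd _).trans (Nat.gcd_dvd_left _ _)
    have hxy' : (Nat.gcd x Y).minFac = (Nat.gcd y Y).minFac := hxy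
    have hdy : (Nat.gcd x Y).minFac ∣ y := by
      rw [hxy']; exact (Nat.minFac_dvd _).trans (Nat.gcd_dvd_left _ _)
    have h1 : (Nat.gcd x Y).minFac ∣ Nat.gcd x y := Nat.dvd_gcd hdx hdy
    have h2 : Nat.gcd x y = 1 := hco x hx.1 y hy.1 hne
    rw [h2] at h1
    exact hp.one_lt.ne' (Nat.dvd_one.mp h1)
  have himg : (fun n => (Nat.gcd n Y).minFac) '' {x ∈ B | ¬ Nat.Coprime x Y} ⊆ ↑Y.primeFactors := by
    rintro _ ⟨x, hx, rfl⟩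
    exact Finset.mem_coe.mpr (Nat.mem_primeFactors.mpr
      ⟨Nat.minFac_prime hx.2, (Nat.minFac_dvd _).trans (Nat.gcd_dvd_right _ _), hY⟩)
  have hfin : {x ∈ B | ¬ Nat.Coprime x Y}.Finite :=
    Set.Finite.of_finite_image ((Y.primeFactors.finite_toSet).subset himg) hinj
  refine ⟨hfin, ?_⟩
  rw [← Set.ncard_image_of_injOn hinj]
  exact le_trans (Set.ncard_le_ncard himg (Y.primeFactors.finite_toSet))
    (le_of_eq (Set.ncard_coe_finset _))

private lemma fresh_pick {H0 : Set ℕ} (hinf : H0.Infinite) (hpp : PairwisePrimeSet H0)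
    {Y : ℕ} (hY : Y ≠ 0) (t : Finset ℕ) : ∃ n ∈ H0, Nat.Coprime n Y ∧ n ∉ t := by
  have hfin := (noncop_bound hpp.2 hY).1
  have hinf2 : (H0 \ ({x ∈ H0 | ¬ Nat.Coprime x Y} ∪ ↑t)).Infinite :=
    hinf.diff (hfin.union t.finite_toSet)
  obtain ⟨n, hn1, hn2⟩ := hinf2.nonempty
  exact ⟨n, hn1, by by_contra hc; exact hn2 (Or.inl ⟨hn1, hc⟩), fun hc => hn2 (Or.inr hc)⟩

private lemma pick_avoid {S : Set ℕ} (hfin : S.Finite) {t : Finset ℕ} (h : t.card < S.ncard) :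
    ∃ x ∈ S, x ∉ t := by
  by_contra hc
  push_neg at hc
  have hsub : S ⊆ ↑t := fun x hx => hc x hx
  have := Set.ncard_le_ncard hsub t.finite_toSet
  rw [Set.ncard_coe_finset] at this
  omega

private lemma primeFactors_factorial_card (n : ℕ) :
    (Nat.factorial n).primeFactors.card ≤ n + 1 := by
  have hsub : (Nat.factorial n).primeFactors ⊆ Finset.range (n + 1) := by
    intro p hp
    obtain ⟨hp1, hp2, _⟩ := Nat.mem_primeFactors.mp hp
    exact Finset.mem_range.mpr (by have := (Nat.Prime.dvd_factorial hp1).mp hp2; omega)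
  simpa using Finset.card_le_card hsub

private lemma crt_finset (s : Finset ℕ) (c mo : ℕ → ℕ)
    (hco : ∀ i ∈ s, ∀ j ∈ s, i ≠ j → Nat.Coprime (mo i) (mo j)) :
    ∃ M : ℕ, ∀ i ∈ s, M ≡ c i [MOD mo i] := by
  classical
  induction s using Finset.induction with
  | empty => exact ⟨0, by simp⟩
  | @insert a s ha ih =>
      obtain ⟨M', hM'⟩ := ih
        (fun i hi j hj hij => hco i (Finset.mem_insert_of_mem hi) j (Finset.mem_insert_of_mem hj) hij)
      have hcop : Nat.Coprime (mo a) (∏ j ∈ s, mo j) :=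
        Nat.Coprime.prod_right fun j hj =>
          hco a (Finset.mem_insert_self _ _) j (Finset.mem_insert_of_mem hj)
            (by rintro rfl; exact ha hj)
      obtain ⟨K, hK1, hK2⟩ := Nat.chineseRemainder hcop (c a) M'
      refine ⟨K, fun i hi => ?_⟩
      rcases Finset.mem_insert.mp hi with rfl | hi
      · exact hK1
      · exact (Nat.ModEq.of_dvd (Finset.dvd_prod_of_mem mo hi) hK2).trans (hM' i hi)

private lemma crt_finset_ge (s : Finset ℕ) (c mo : ℕ → ℕ) (bnd : ℕ)
    (hpos : ∀ i ∈ s, 0 < mo i)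
    (hco : ∀ i ∈ s, ∀ j ∈ s, i ≠ j → Nat.Coprime (mo i) (mo j)) :
    ∃ M : ℕ, bnd ≤ M ∧ ∀ i ∈ s, M ≡ c i [MOD mo i] := by
  obtain ⟨M0, hM0⟩ := crt_finset s c mo hco
  refine ⟨M0 + bnd * ∏ i ∈ s, mo i, ?_, ?_⟩
  · have h1 : 0 < ∏ i ∈ s, mo i := Finset.prod_pos hpos
    calc bnd = bnd * 1 := (mul_one _).symm
    _ ≤ bnd * ∏ i ∈ s, mo i := Nat.mul_le_mul_left _ h1
    _ ≤ M0 + bnd * ∏ i ∈ s, mo i := Nat.le_add_left _ _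
  · intro i hi
    have hdvd : mo i ∣ bnd * ∏ j ∈ s, mo j :=
      Dvd.dvd.mul_left (Finset.dvd_prod_of_mem mo hi) bnd
    have h2 : M0 + bnd * ∏ j ∈ s, mo j ≡ M0 + 0 [MOD mo i] :=
      Nat.ModEq.add_left M0 ((Nat.modEq_zero_iff_dvd).mpr hdvd)
    simpa using h2.trans (hM0 i hi)

private lemma lin_solve {g mo : ℕ} (hg : Nat.Coprime g mo) (hmo : 0 < mo) (a b : ℕ) :
    ∃ c : ℕ, g * c + a ≡ b [MOD mo] := by
  rcases eq_or_lt_of_le (show 1 ≤ mo from hmo) with h1 | h1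
  · exact ⟨0, h1 ▸ Nat.modEq_one⟩
  · obtain ⟨gi, -, hgi⟩ := Nat.exists_mul_mod_eq_one_of_coprime hg h1
    set d := (b % mo + mo - a % mo) % mo with hd
    refine ⟨gi * d, ?_⟩
    have h2 : g * (gi * d) ≡ d [MOD mo] := by
      calc g * (gi * d) = g * gi * d := (mul_assoc _ _ _).symm
      _ ≡ 1 * d [MOD mo] := Nat.ModEq.mul_right d
          (show (g * gi) % mo = 1 % mo by rw [hgi, Nat.mod_eq_of_lt h1])
      _ = d := one_mul d
    have h3 : d + a ≡ b [MOD mo] := by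
      show (d + a) % mo = b % mo
      have hdlt : d < mo := Nat.mod_lt _ (by omega)
      have halt : a % mo < mo := Nat.mod_lt _ (by omega)
      have hblt : b % mo < mo := Nat.mod_lt _ (by omega)
      calc (d + a) % mo = (d % mo + a % mo) % mo := Nat.add_mod d a mo
      _ = (d + a % mo) % mo := by rw [Nat.mod_eq_of_lt hdlt]
      _ = ((b % mo + mo - a % mo) + a % mo) % mo := by rw [hd, Nat.mod_add_mod]
      _ = (b % mo + mo) % mo := by congr 1; omega
      _ = b % mo % mo := by rw [Nat.add_mod_right]
      _ = b % mo := Nat.mod_eq_of_lt hblt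
    exact (Nat.ModEq.add_right a h2).trans h3

private lemma pick_distinct_coprime {H0 : Set ℕ} (hinf : H0.Infinite) (hpp : PairwisePrimeSet H0)
    {Y : ℕ} (hY : Y ≠ 0) (s : Finset ℕ) :
    ∃ nf : ℕ → ℕ, (∀ j ∈ s, nf j ∈ H0 ∧ Nat.Coprime (nf j) Y) ∧
      (∀ j ∈ s, ∀ j' ∈ s, j ≠ j' → nf j ≠ nf j') := by
  classical
  induction s using Finset.induction with
  | empty => exact ⟨fun _ => 0, by simp, by simp⟩
  | @insert a s ha ih =>
      obtain ⟨nf, h1, h2⟩ := ih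
      obtain ⟨n0, hn0, hcop, hnotin⟩ := fresh_pick hinf hpp hY (s.image nf)
      have hmemtl : ∀ j, j ∈ insert a s → j ≠ a → j ∈ s := by
        intro j hj hja
        rcases Finset.mem_insert.mp hj with h | h
        · exact absurd h hja
        · exact h
      refine ⟨Function.update nf a n0, ?_, ?_⟩
      · intro j hj
        by_cases hja : j = a
        · subst hja; rw [Function.update_self]; exact ⟨hn0, hcop⟩
        · rw [Function.update_of_ne hja]
          exact h1 j (hmemtl j hj hja)
      · intro j hj j' hj' hne
        by_cases hja : j = a <;> by_cases hja' : j' = a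
        · exact absurd (hja.trans hja'.symm) hne
        · subst hja
          rw [Function.update_self, Function.update_of_ne hja']
          exact fun hc => hnotin (by rw [hc]; exact Finset.mem_image_of_mem nf (hmemtl j' hj' hja'))
        · subst hja'
          rw [Function.update_of_ne hja, Function.update_self]
          exact fun hc => hnotin (by rw [← hc]; exact Finset.mem_image_of_mem nf (hmemtl j hj hja))
        · rw [Function.update_of_ne hja, Function.update_of_ne hja']
          exact h2 j (hmemtl j hj hja) j' (hmemtl j' hj' hja') hne

private abbrev GoodSeq (A : Set ℕ) (l : ℕ) (J : Finset ℕ) (bf : ℕ → ℕ) (i : ℕ)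
    (e : ℕ → ℕ × ℕ × ℕ) : Prop :=
  (∀ s, s < i →
    (e s).1 ∈ A ∧
    (e s).1 = (e s).2.1 * (e s).2.2 ∧
    1 ≤ (e s).2.1 ∧ (e s).2.1 ≤ 2 * l + 1 ∧
    (e s).2.1 ∉ J ∧
    0 < (e s).2.2 ∧
    Nat.Coprime ((e s).2.2) (Nat.factorial (2 * l + 1)) ∧
    ∀ j ∈ J, Nat.Coprime (bf j) ((e s).2.2)) ∧
  (∀ s t, s < t → t < i → (e s).1 < (e t).1 ∧ Nat.Coprime ((e s).2.2) ((e t).2.2))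

/-- producing a new pairwise prime set `C_w` with `w ∈ T(l) \ Mul(F)`
from a Triveni triplet of order `|F|`. -/
theorem higher_triveni_step (m : ℕ → ℕ → ℕ)
    (hm : ∀ h l n : ℕ, 0 < h → 0 < l → 0 < n →
      ∃ x : ℕ → ℕ, (∀ i, i < h → 0 < x i) ∧ (∀ i j, i < j → j < h → x i < x j) ∧
        (⋃ i ∈ Finset.range h, Set.Icc (x i) (x i + 2 * l)) ⊆
          Set.Icc n (n + m h l) ∧
        (∀ a ∈ ⋃ i ∈ Finset.range h, Set.Icc (x i) (x i + 2 * l),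
         ∀ b ∈ ⋃ i ∈ Finset.range h, Set.Icc (x i) (x i + 2 * l),
            a ≠ b → Nat.gcd a b ∈ Tset l))
    (k l h : ℕ) (hk : 0 < k) (hl : 0 < l) (hh : 0 < h)
    (A : Set ℕ) (hA : SyndeticWith A (2 * l + 1))
    (H0 : Set ℕ) (hH0inf : H0.Infinite) (hH0 : PairwisePrimeSet H0)
    (F : Set ℕ) (hF : F ⊆ Tset l \ {1})
    (hTriv : TriveniTriplet A F (m (Dcard l * h) l + 2 * Cbound l) l)
    (hnot : ¬∃ x r n : ℕ, n ∈ H0 ∧ 0 < r ∧ r ≡ 1 [MOD n] ∧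
      x ∈ A ∧ x * n ^ k * r ∈ A) :
    ∃ w ∈ Tset l, w ∉ MulSet l F ∧ ∃ Cw : Set ℕ, PairwisePrimeSet Cw ∧
      Cw.ncard = h ∧ ∀ x ∈ Cw, w * x ∈ A := by
  classical
  obtain ⟨hF', B, hB1, hB2⟩ := hTriv
  set fact := Nat.factorial (2 * l + 1) with hfactdef
  set Lam := m (Dcard l * h) l + 2 * Cbound l with hLamdef
  have hfactpos : 0 < fact := Nat.factorial_pos _
  have hC2 : 2 * l + 2 ≤ (2 * l + 1) ^ (2 * l + 1) := by
    calc 2 * l + 2 ≤ (2 * l + 1) * (2 * l + 1) := by nlinarith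
    _ = (2 * l + 1) ^ 2 := (sq (2 * l + 1)).symm
    _ ≤ (2 * l + 1) ^ (2 * l + 1) := Nat.pow_le_pow_right (by omega) (by omega)
  have hLamge : 4 * l + 4 ≤ Lam := by
    have hcb : Cbound l = (2 * l + 1) ^ (2 * l + 1) := rfl
    omega
  -- the set of "dangerous" offsets
  set J : Finset ℕ := (Finset.Icc 1 (2 * l + 1)).filter (fun j => ∃ u ∈ F, u ∣ j) with hJdef
  have hJcard : J.card ≤ 2 * l + 1 := by
    calc J.card ≤ (Finset.Icc 1 (2 * l + 1)).card := Finset.card_filter_le _ _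
    _ = 2 * l + 1 := by rw [Nat.card_Icc]; omega
  have hJmem : ∀ j ∈ J, (1 ≤ j ∧ j ≤ 2 * l + 1) ∧ ∃ u ∈ F, u ∣ j := by
    intro j hj
    rw [hJdef, Finset.mem_filter, Finset.mem_Icc] at hj
    exact ⟨hj.1, hj.2⟩
  have hJu : ∀ j : ℕ, ∃ u, j ∈ J → u ∈ F ∧ u ∣ j := by
    intro j
    by_cases hj : j ∈ J
    · obtain ⟨u, hu1, hu2⟩ := (hJmem j hj).2
      exact ⟨u, fun _ => ⟨hu1, hu2⟩⟩
    · exact ⟨1, fun hc => absurd hc hj⟩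
  choose uf huf using hJu
  have hufT : ∀ j ∈ J, uf j ∈ Tset l := fun j hj => (hF (huf j hj).1).1
  have hufpos : ∀ j ∈ J, 0 < uf j := fun j hj => tset_pos (hufT j hj)
  have huffact : ∀ j ∈ J, uf j ∣ fact := fun j hj => tset_dvd_factorial (hufT j hj)
  -- choice of the b's from the Triveni sets
  have bpick : ∀ L : List ℕ, L.Nodup → (∀ j ∈ L, j ∈ J) → ∀ used : Finset ℕ,
      used.card + L.length + (2 * l + 2) ≤ Lam →
      ∃ bf : ℕ → ℕ, (∀ j ∈ L, (bf j ∈ B (uf j) ∧ Nat.Coprime (bf j) fact) ∧ bf j ∉ used) ∧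
        (∀ j ∈ L, ∀ j' ∈ L, j ≠ j' → bf j ≠ bf j') := by
    intro L
    induction L with
    | nil => intro _ _ used _; exact ⟨fun _ => 0, by simp, by simp⟩
    | cons jh tl ih =>
        intro hnd hmem used hcard
        simp only [List.length_cons] at hcard
        have hjhJ : jh ∈ J := hmem jh (List.mem_cons_self (a := jh) (l := tl))
        have hu := huf jh hjhJ
        have hBu := hB1 (uf jh) hu.1
        have hBfin : (B (uf jh)).Finite := by
          by_contra hc
          have h0 := Set.Infinite.ncard hc
          rw [hBu.2.1] at h0
          omega
        have hSfin : {x ∈ B (uf jh) | Nat.Coprime x fact}.Finite :=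
          hBfin.subset (Set.sep_subset _ _)
        obtain ⟨hBadfin, hBadcard⟩ := noncop_bound hBu.1.2 hfactpos.ne'
        have hBadcard2 : {x ∈ B (uf jh) | ¬ Nat.Coprime x fact}.ncard ≤ 2 * l + 2 :=
          le_trans hBadcard (primeFactors_factorial_card (2 * l + 1))
        have hsplit : B (uf jh) ⊆
            {x ∈ B (uf jh) | Nat.Coprime x fact} ∪ {x ∈ B (uf jh) | ¬ Nat.Coprime x fact} := by
          intro x hx
          by_cases hcx : Nat.Coprime x fact
          · exact Or.inl ⟨hx, hcx⟩
          · exact Or.inr ⟨hx, hcx⟩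
        have h1 : Lam ≤ {x ∈ B (uf jh) | Nat.Coprime x fact}.ncard
            + {x ∈ B (uf jh) | ¬ Nat.Coprime x fact}.ncard := by
          rw [← hBu.2.1]
          exact le_trans (Set.ncard_le_ncard hsplit (hSfin.union hBadfin)) (Set.ncard_union_le _ _)
        have h2 : used.card < {x ∈ B (uf jh) | Nat.Coprime x fact}.ncard := by omega
        obtain ⟨x, hxS, hxused⟩ := pick_avoid hSfin h2
        obtain ⟨bf, ih1, ih2⟩ := ih (List.nodup_cons.mp hnd).2
          (fun j hj => hmem j (List.mem_cons_of_mem _ hj)) (insert x used)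
          (by
            have := Finset.card_insert_le x used
            omega)
        refine ⟨fun y => if y = jh then x else bf y, ?_, ?_⟩
        · intro j hj
          rcases List.mem_cons.mp hj with rfl | hj'
          · simp only [if_pos rfl]
            exact ⟨⟨hxS.1, hxS.2⟩, hxused⟩
          · have hne : j ≠ jh := by
              rintro rfl; exact (List.nodup_cons.mp hnd).1 hj'
            simp only [if_neg hne]
            obtain ⟨h3, h4⟩ := ih1 j hj'
            exact ⟨h3, fun hc => h4 (Finset.mem_insert_of_mem hc)⟩
        · intro j hj j' hj' hne
          rcases List.mem_cons.mp hj with rfl | hj2 <;>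
            rcases List.mem_cons.mp hj' with rfl | hj2'
          · exact absurd rfl hne
          · have hne2 : j' ≠ j := by
              rintro rfl; exact (List.nodup_cons.mp hnd).1 hj2'
            simp only [if_pos rfl, if_neg hne2]
            exact fun hc => (ih1 j' hj2').2 (by rw [← hc]; exact Finset.mem_insert_self x used)
          · have hne1 : j ≠ j' := by
              rintro rfl; exact (List.nodup_cons.mp hnd).1 hj2
            simp only [if_pos rfl, if_neg hne1]
            exact fun hc => (ih1 j hj2).2 (by rw [hc]; exact Finset.mem_insert_self x used)
          · have hne1 : j ≠ jh := by rintro rfl; exact (List.nodup_cons.mp hnd).1 hj2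
            have hne2 : j' ≠ jh := by rintro rfl; exact (List.nodup_cons.mp hnd).1 hj2'
            simp only [if_neg hne1, if_neg hne2]
            exact ih2 j hj2 j' hj2' hne
  obtain ⟨bf, hbf1, hbf2⟩ := bpick J.toList (Finset.nodup_toList J)
    (fun j hj => (Finset.mem_toList).mp hj) ∅
    (by
      have hlen : J.toList.length = J.card := Finset.length_toList J
      simp only [Finset.card_empty]
      omega)
  have hbmem : ∀ j ∈ J, bf j ∈ B (uf j) := fun j hj =>
    ((hbf1 j ((Finset.mem_toList).mpr hj)).1).1
  have hbfact : ∀ j ∈ J, Nat.Coprime (bf j) fact := fun j hj =>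
    ((hbf1 j ((Finset.mem_toList).mpr hj)).1).2
  have hbpos : ∀ j ∈ J, 0 < bf j := fun j hj =>
    (hB1 (uf j) (huf j hj).1).1.1 (bf j) (hbmem j hj)
  have hbcop : ∀ j ∈ J, ∀ j' ∈ J, j ≠ j' → Nat.Coprime (bf j) (bf j') := by
    intro j hj j' hj' hne
    by_cases hueq : uf j = uf j'
    · refine (hB1 (uf j) (huf j hj).1).1.2 (bf j) (hbmem j hj) (bf j') ?_
        (hbf2 j ((Finset.mem_toList).mpr hj) j' ((Finset.mem_toList).mpr hj') hne)
      rw [hueq]; exact hbmem j' hj'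
    · exact hB2 (uf j) (huf j hj).1 (uf j') (huf j' hj').1 hueq (bf j) (hbmem j hj)
        (bf j') (hbmem j' hj')
  set Bprod := ∏ j ∈ J, bf j with hBproddef
  have hBprodpos : 0 < Bprod := Finset.prod_pos (fun j hj => hbpos j hj)
  -- the inductive construction
  have step : ∀ (i : ℕ) (e : ℕ → ℕ × ℕ × ℕ), GoodSeq A l J bf i e →
      ∃ e', GoodSeq A l J bf (i + 1) e' := by
    intro i e he
    have hapos : ∀ s, s < i → 0 < (e s).1 := by
      intro s hs
      obtain ⟨_, h2, h3, _, _, h6, _, _⟩ := he.1 s hs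
      rw [h2]; exact Nat.mul_pos (by omega) h6
    set X := fact * ∏ s ∈ Finset.range i, (e s).1 with hXdef
    have hXpos : 0 < X :=
      Nat.mul_pos hfactpos (Finset.prod_pos (fun s hs => hapos s (Finset.mem_range.mp hs)))
    have hfactX : fact ∣ X := dvd_mul_right _ _
    have hprodX : (∏ s ∈ Finset.range i, (e s).1) ∣ X := dvd_mul_left _ _
    obtain ⟨nf, hnf1, hnf2⟩ := pick_distinct_coprime hH0inf hH0
      (Nat.mul_pos hXpos hBprodpos).ne' J
    have hnmem : ∀ j ∈ J, nf j ∈ H0 := fun j hj => (hnf1 j hj).1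
    have hnpos : ∀ j ∈ J, 0 < nf j := fun j hj => hH0.1 _ (hnmem j hj)
    have hnX : ∀ j ∈ J, Nat.Coprime (nf j) X := fun j hj =>
      Nat.Coprime.coprime_dvd_right (dvd_mul_right X Bprod) (hnf1 j hj).2
    have hnB : ∀ j ∈ J, ∀ j' ∈ J, Nat.Coprime (nf j) (bf j') := fun j hj j' hj' =>
      Nat.Coprime.coprime_dvd_right
        (dvd_trans (Finset.dvd_prod_of_mem bf hj') (dvd_mul_left Bprod X)) (hnf1 j hj).2
    have hbX : ∀ j ∈ J, Nat.Coprime (bf j) X := by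
      intro j hj
      rw [hXdef]
      refine Nat.Coprime.mul_right (hbfact j hj) (Nat.Coprime.prod_right ?_)
      intro s hs
      obtain ⟨_, h2, h3, h4, _, _, _, h8⟩ := he.1 s (Finset.mem_range.mp hs)
      rw [h2]
      refine Nat.Coprime.mul_right ?_ (h8 j hj)
      exact Nat.Coprime.coprime_dvd_right (Nat.dvd_factorial (by omega) h4) (hbfact j hj)
    have hXmo : ∀ j ∈ J, Nat.Coprime X (bf j * nf j ^ (k + 1)) := fun j hj =>
      Nat.Coprime.mul_right (hbX j hj).symm (Nat.Coprime.pow_right _ (hnX j hj).symm)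
    have hudX : ∀ j ∈ J, uf j ∣ X := fun j hj => dvd_trans (huffact j hj) hfactX
    have hgmo : ∀ j ∈ J, Nat.Coprime ((X / uf j) * X) (bf j * nf j ^ (k + 1)) := by
      intro j hj
      exact Nat.Coprime.coprime_dvd_left
        (mul_dvd_mul (Nat.div_dvd_of_dvd (hudX j hj)) dvd_rfl)
        (Nat.Coprime.mul (hXmo j hj) (hXmo j hj))
    have hres : ∀ j : ℕ, ∃ cj : ℕ, j ∈ J →
        ((X / uf j) * X) * cj + (j / uf j) ≡ bf j * nf j ^ k [MOD bf j * nf j ^ (k + 1)] := by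
      intro j
      by_cases hj : j ∈ J
      · obtain ⟨cj, hcj⟩ := lin_solve (hgmo j hj)
          (Nat.mul_pos (hbpos j hj) (pow_pos (hnpos j hj) _)) (j / uf j) (bf j * nf j ^ k)
        exact ⟨cj, fun _ => hcj⟩
      · exact ⟨0, fun hc => absurd hc hj⟩
    choose cf hcf using hres
    have hmoco : ∀ j ∈ J, ∀ j' ∈ J, j ≠ j' →
        Nat.Coprime (bf j * nf j ^ (k + 1)) (bf j' * nf j' ^ (k + 1)) := by
      intro j hj j' hj' hne
      have h1 : Nat.Coprime (bf j) (bf j' * nf j' ^ (k + 1)) :=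
        Nat.Coprime.mul_right (hbcop j hj j' hj' hne)
          (Nat.Coprime.pow_right _ ((hnB j' hj' j hj).symm))
      have h2 : Nat.Coprime (nf j ^ (k + 1)) (bf j' * nf j' ^ (k + 1)) := by
        refine Nat.Coprime.mul_right ?_ ?_
        · exact Nat.Coprime.pow_left _ (hnB j hj j' hj')
        · exact Nat.Coprime.pow _ _
            (hH0.2 _ (hnmem j hj) _ (hnmem j' hj') (hnf2 j hj j' hj' hne))
      exact Nat.Coprime.mul h1 h2
    obtain ⟨M, hMge, hM⟩ := crt_finset_ge J cf (fun j => bf j * nf j ^ (k + 1))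
      (1 + ∑ j ∈ J, bf j * nf j ^ k)
      (fun j hj => Nat.mul_pos (hbpos j hj) (pow_pos (hnpos j hj) _)) hmoco
    have hMpos : 0 < M := by omega
    obtain ⟨a, haA, ha1, ha2⟩ := hA (X * X * M + 1) (by positivity)
    set j := a - X * X * M with hjdef
    have hj1 : 1 ≤ j := by omega
    have hj2 : j ≤ 2 * l + 1 := by omega
    have haNj : a = X * X * M + j := by omega
    by_cases hjJ : j ∈ J
    · exfalso
      have hu := huf j hjJ
      have h1 : ((X / uf j) * X) * M + (j / uf j)
          ≡ bf j * nf j ^ k [MOD bf j * nf j ^ (k + 1)] :=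
        ((Nat.ModEq.mul_left _ (hM j hjJ)).add_right _).trans (hcf j hjJ)
      have hXupos : 0 < X / uf j :=
        Nat.div_pos (Nat.le_of_dvd hXpos (hudX j hjJ)) (hufpos j hjJ)
      have hsingle : bf j * nf j ^ k ≤ ∑ j' ∈ J, bf j' * nf j' ^ k :=
        Finset.single_le_sum (f := fun j' => bf j' * nf j' ^ k)
          (fun _ _ => Nat.zero_le _) hjJ
      have h2 : bf j * nf j ^ k ≤ ((X / uf j) * X) * M + (j / uf j) := by
        have h3 : M ≤ ((X / uf j) * X) * M :=
          Nat.le_mul_of_pos_left M (Nat.mul_pos hXupos hXpos)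
        calc bf j * nf j ^ k ≤ ∑ j' ∈ J, bf j' * nf j' ^ k := hsingle
        _ ≤ 1 + ∑ j' ∈ J, bf j' * nf j' ^ k := Nat.le_add_left _ 1
        _ ≤ M := hMge
        _ ≤ ((X / uf j) * X) * M := h3
        _ ≤ ((X / uf j) * X) * M + (j / uf j) := Nat.le_add_right _ _
      obtain ⟨sq, hsq⟩ := (Nat.modEq_iff_dvd' h2).mp h1.symm
      have hsq' : ((X / uf j) * X) * M + (j / uf j)
          = bf j * nf j ^ k + (bf j * nf j ^ (k + 1)) * sq := by omega
      have e0 : uf j * (((X / uf j) * X) * M + (j / uf j)) = X * X * M + j := by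
        rw [mul_add, Nat.mul_div_cancel' hu.2, ← mul_assoc, ← mul_assoc,
          Nat.mul_div_cancel' (hudX j hjJ)]
      have hkey : a = (uf j * bf j) * nf j ^ k * (1 + sq * nf j) := by
        rw [haNj, ← e0, hsq', pow_succ]
        ring
      refine hnot ⟨uf j * bf j, 1 + sq * nf j, nf j, hnmem j hjJ, by omega, ?_, ?_, ?_⟩
      · exact ((Nat.modEq_iff_dvd' (by omega)).mpr
          (by simpa using dvd_mul_left (nf j) sq)).symm
      · exact (hB1 (uf j) hu.1).2.2 (bf j) (hbmem j hjJ)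
      · rw [← hkey]; exact haA
    · have hjfact : j ∣ fact := Nat.dvd_factorial (by omega) hj2
      have hjX : j ∣ X := dvd_trans hjfact hfactX
      set c := (X / j) * X * M + 1 with hcdef
      have hcpos : 0 < c := by omega
      have hac : a = j * c := by
        have e0 : j * ((X / j) * X * M) = X * X * M := by
          rw [← mul_assoc, ← mul_assoc, Nat.mul_div_cancel' hjX]
        rw [haNj, hcdef, Nat.mul_add, e0, mul_one]
      have hnotpX : ∀ p : ℕ, p.Prime → p ∣ X → ¬ p ∣ c := by
        intro p hp hpX hpc
        have h1 : p ∣ (X / j) * X * M := (Dvd.dvd.mul_left hpX (X / j)).mul_right M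
        have h2 : p ∣ 1 := by
          have h3 := Nat.dvd_sub hpc h1
          rw [hcdef] at h3
          simpa using h3
        exact hp.one_lt.ne' (Nat.dvd_one.mp h2)
      have hcfact : Nat.Coprime c fact := by
        by_contra hcc
        obtain ⟨p, hp, hpg⟩ := Nat.exists_prime_and_dvd hcc
        exact hnotpX p hp (dvd_trans (hpg.trans (Nat.gcd_dvd_right _ _)) hfactX)
          (hpg.trans (Nat.gcd_dvd_left _ _))
      have hcold : ∀ s, s < i → Nat.Coprime ((e s).2.2) c := by
        intro s hs
        by_contra hcc
        obtain ⟨p, hp, hpg⟩ := Nat.exists_prime_and_dvd hcc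
        have hpcs : p ∣ (e s).2.2 := hpg.trans (Nat.gcd_dvd_left _ _)
        have hpc : p ∣ c := hpg.trans (Nat.gcd_dvd_right _ _)
        have hpas : p ∣ (e s).1 := by
          rw [(he.1 s hs).2.1]; exact hpcs.mul_left _
        have hpX : p ∣ X :=
          dvd_trans (dvd_trans hpas
            (Finset.dvd_prod_of_mem (fun t => (e t).1) (Finset.mem_range.mpr hs))) hprodX
        exact hnotpX p hp hpX hpc
      have hP9 : ∀ j0 ∈ J, Nat.Coprime (bf j0) c := by
        intro j0 hj0
        by_contra hcc
        obtain ⟨p, hp, hpg⟩ := Nat.exists_prime_and_dvd hcc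
        have hpb : p ∣ bf j0 := hpg.trans (Nat.gcd_dvd_left _ _)
        have hpc : p ∣ c := hpg.trans (Nat.gcd_dvd_right _ _)
        by_cases hpX : p ∣ X
        · exact hnotpX p hp hpX hpc
        · have hj0Icc := (hJmem j0 hj0).1
          have hu0 := huf j0 hj0
          have hplarge : 2 * l + 1 < p := by
            by_contra hple
            have hpfact : p ∣ fact := Nat.dvd_factorial hp.pos (by omega)
            have hd1 : p ∣ Nat.gcd (bf j0) fact := Nat.dvd_gcd hpb hpfact
            have hd2 : Nat.gcd (bf j0) fact = 1 := hbfact j0 hj0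
            rw [hd2] at hd1
            exact hp.one_lt.ne' (Nat.dvd_one.mp hd1)
          have h1 : ((X / uf j0) * X) * M + (j0 / uf j0)
              ≡ bf j0 * nf j0 ^ k [MOD bf j0 * nf j0 ^ (k + 1)] :=
            ((Nat.ModEq.mul_left _ (hM j0 hj0)).add_right _).trans (hcf j0 hj0)
          have hpmo : p ∣ bf j0 * nf j0 ^ (k + 1) := hpb.mul_right _
          have h2 : ((X / uf j0) * X) * M + (j0 / uf j0) ≡ 0 [MOD p] :=
            (Nat.ModEq.of_dvd hpmo h1).trans
              ((Nat.modEq_zero_iff_dvd).mpr (hpb.mul_right _))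
          have e0 : uf j0 * (((X / uf j0) * X) * M + (j0 / uf j0)) = X * X * M + j0 := by
            rw [mul_add, Nat.mul_div_cancel' hu0.2, ← mul_assoc, ← mul_assoc,
              Nat.mul_div_cancel' (hudX j0 hj0)]
          have h3 : X * X * M + j0 ≡ 0 [MOD p] := by
            have h4 := Nat.ModEq.mul_left (uf j0) h2
            rw [e0, mul_zero] at h4
            exact h4
          have h5 : X * X * M + j ≡ 0 [MOD p] := by
            refine (Nat.modEq_zero_iff_dvd).mpr ?_
            rw [← haNj, hac]
            exact hpc.mul_left j
          have h6 : j ≡ j0 [MOD p] :=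
            Nat.ModEq.add_left_cancel' (X * X * M) (h5.trans h3.symm)
          have hjne : j ≠ j0 := fun hh => hjJ (hh ▸ hj0)
          rcases lt_or_gt_of_ne hjne with hlt | hgt
          · have h7 := (Nat.modEq_iff_dvd' (le_of_lt hlt)).mp h6
            have h8 := Nat.le_of_dvd (by omega) h7
            omega
          · have h7 := (Nat.modEq_iff_dvd' (le_of_lt hgt)).mp h6.symm
            have h8 := Nat.le_of_dvd (by omega) h7
            omega
      have hbig : ∀ s, s < i → (e s).1 < a := by
        intro s hs
        have h1 : (e s).1 ≤ ∏ t ∈ Finset.range i, (e t).1 :=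
          Nat.le_of_dvd (Finset.prod_pos (fun t ht => hapos t (Finset.mem_range.mp ht)))
            (Finset.dvd_prod_of_mem (fun t => (e t).1) (Finset.mem_range.mpr hs))
        have h2 : (∏ t ∈ Finset.range i, (e t).1) ≤ X := Nat.le_of_dvd hXpos hprodX
        have h3 : X ≤ X * (X * M) := Nat.le_mul_of_pos_right X (Nat.mul_pos hXpos hMpos)
        have h4 : X * (X * M) = X * X * M := (mul_assoc _ _ _).symm
        omega
      refine ⟨fun s => if s = i then (a, j, c) else e s, ?_, ?_⟩
      · intro s hs
        by_cases hsi : s = i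
        · subst hsi
          simp only [if_pos rfl]
          exact ⟨haA, hac, hj1, hj2, hjJ, hcpos, hcfact, fun j0 hj0 => hP9 j0 hj0⟩
        · have hs' : s < i := by omega
          simp only [if_neg hsi]
          exact he.1 s hs'
      · intro s t hst hti
        by_cases hti' : t = i
        · have hsne : s ≠ i := by omega
          have hs' : s < i := by omega
          simp only [if_neg hsne, if_pos hti']
          rw [show t = i from hti'] at hst
          exact ⟨hbig s hs', hcold s hs'⟩
        · have ht' : t < i := by omega
          have hsne : s ≠ i := by omega
          simp only [if_neg hsne, if_neg hti']
          exact he.2 s t hst ht'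
  have iter : ∀ i : ℕ, ∃ e, GoodSeq A l J bf i e := by
    intro i
    induction i with
    | zero =>
        exact ⟨fun _ => (0, 0, 0), fun s hs => absurd hs (by omega),
          fun s t hst hti => absurd hti (by omega)⟩
    | succ n ih =>
        obtain ⟨e, he⟩ := ih
        exact step n e he
  obtain ⟨e, he⟩ := iter ((2 * l + 1) * (h - 1) + 1)
  have hmaps : ∀ s ∈ Finset.range ((2 * l + 1) * (h - 1) + 1),
      (e s).2.1 ∈ Finset.Icc 1 (2 * l + 1) := by
    intro s hs
    obtain ⟨_, _, h3, h4, _, _, _, _⟩ := he.1 s (Finset.mem_range.mp hs)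
    exact Finset.mem_Icc.mpr ⟨h3, h4⟩
  have hcards : (Finset.Icc 1 (2 * l + 1)).card * (h - 1)
      < (Finset.range ((2 * l + 1) * (h - 1) + 1)).card := by
    rw [Nat.card_Icc, Finset.card_range]
    have he2 : 2 * l + 1 + 1 - 1 = 2 * l + 1 := by omega
    rw [he2]
    omega
  obtain ⟨jstar, hjstarI, hfib⟩ :=
    Finset.exists_lt_card_fiber_of_mul_lt_card_of_maps_to hmaps hcards
  have hjstarIcc := Finset.mem_Icc.mp hjstarI
  obtain ⟨T, hTsub, hTcard⟩ := Finset.exists_subset_card_eq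
    (show h ≤ (Finset.filter (fun s => (e s).2.1 = jstar)
      (Finset.range ((2 * l + 1) * (h - 1) + 1))).card by omega)
  have hTfacts : ∀ s ∈ T, s < (2 * l + 1) * (h - 1) + 1 ∧ (e s).2.1 = jstar := by
    intro s hs
    have hmem := hTsub hs
    rw [Finset.mem_filter, Finset.mem_range] at hmem
    exact hmem
  have hTne : T.Nonempty := Finset.card_pos.mp (by omega)
  obtain ⟨s0, hs0⟩ := hTne
  refine ⟨jstar, mem_tset_of_le (by omega) (by omega), ?_, ?_⟩
  · rintro ⟨_, u, huF, hudvd⟩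
    have h1 := he.1 s0 (hTfacts s0 hs0).1
    refine h1.2.2.2.2.1 ?_
    rw [(hTfacts s0 hs0).2, hJdef]
    exact Finset.mem_filter.mpr ⟨Finset.mem_Icc.mpr ⟨by omega, by omega⟩, ⟨u, huF, hudvd⟩⟩
  · have hinj : Set.InjOn (fun s => (e s).2.2) ↑T := by
      intro s hsT t htT hceq
      by_contra hne
      have hsT' : s ∈ T := hsT
      have htT' : t ∈ T := htT
      have hceq' : (e s).2.2 = (e t).2.2 := hceq
      have h2 := (he.1 s (hTfacts s hsT').1).2.1
      have h3 := (he.1 t (hTfacts t htT').1).2.1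
      rcases lt_or_gt_of_ne hne with hlt | hgt
      · have h1 := (he.2 s t hlt (hTfacts t htT').1).1
        rw [h2, h3, (hTfacts s hsT').2, (hTfacts t htT').2, hceq'] at h1
        omega
      · have h1 := (he.2 t s hgt (hTfacts s hsT').1).1
        rw [h2, h3, (hTfacts s hsT').2, (hTfacts t htT').2, hceq'] at h1
        omega
    refine ⟨↑(T.image (fun s => (e s).2.2)), ⟨?_, ?_⟩, ?_, ?_⟩
    · intro x hx
      obtain ⟨s, hsT, rfl⟩ := Finset.mem_image.mp (Finset.mem_coe.mp hx)
      exact (he.1 s (hTfacts s hsT).1).2.2.2.2.2.1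
    · intro x hx y hy hxy
      obtain ⟨s, hsT, rfl⟩ := Finset.mem_image.mp (Finset.mem_coe.mp hx)
      obtain ⟨t, htT, rfl⟩ := Finset.mem_image.mp (Finset.mem_coe.mp hy)
      have hst : s ≠ t := fun hc => hxy (by rw [hc])
      rcases lt_or_gt_of_ne hst with hlt | hgt
      · exact (he.2 s t hlt (hTfacts t htT).1).2
      · exact ((he.2 t s hgt (hTfacts s hsT).1).2).symm
    · rw [Set.ncard_coe_finset, Finset.card_image_of_injOn hinj, hTcard]
    · intro x hx
      obtain ⟨s, hsT, rfl⟩ := Finset.mem_image.mp (Finset.mem_coe.mp hx)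
      have h2 := (he.1 s (hTfacts s hsT).1).2.1
      have h1 := (he.1 s (hTfacts s hsT).1).1
      rw [← (hTfacts s hsT).2, ← h2]
      exact h1
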